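/- Let $H$ be a finite simple graph with at least two edges in which every vertex has degree $\ell$ or $h$, where $h > \ell \ge 2$, the set $V_\ell$ of degree-$\ell$ vertices induces a subgraph with at most one edge, the set $V_h$ of degree-$h$ vertices induces a subgraph with at most one edge, and both $V_\ell$ and $V_h$ are nonempty. Then $|V_\ell| \ge 2$, and if $|V_\ell| = 2$ then $H$ is isomorphic to the diamond graph $K_2 + 2K_1$ (the join of an edge with two isolated vertices). -/

import Mathlib

/-- The diamond graph: `K₄` minus one edge, with the two degree-3 vertices `0, 1`
and the two nonadjacent degree-2 vertices `2, 3`. -/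
def diamond : SimpleGraph (Fin 4) :=
  SimpleGraph.fromEdgeSet {s(0, 1), s(0, 2), s(0, 3), s(1, 2), s(1, 3)}

theorem stmt_2 {V : Type*} [Fintype V] [DecidableEq V]
    (H : SimpleGraph V) [DecidableRel H.Adj]
    (ℓ h : ℕ) (hℓ : 2 ≤ ℓ) (hlh : ℓ < h)
    (hedges : 2 ≤ H.edgeFinset.card)
    (hdeg : ∀ v : V, H.degree v = ℓ ∨ H.degree v = h)
    (hVl : ∀ e₁ ∈ H.edgeFinset, ∀ e₂ ∈ H.edgeFinset,
      (∀ v ∈ e₁, H.degree v = ℓ) → (∀ v ∈ e₂, H.degree v = ℓ) → e₁ = e₂)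
    (hVh : ∀ e₁ ∈ H.edgeFinset, ∀ e₂ ∈ H.edgeFinset,
      (∀ v ∈ e₁, H.degree v = h) → (∀ v ∈ e₂, H.degree v = h) → e₁ = e₂)
    (hVlne : ∃ v, H.degree v = ℓ) (hVhne : ∃ v, H.degree v = h) :
    2 ≤ (Finset.univ.filter fun v => H.degree v = ℓ).card ∧
      ((Finset.univ.filter fun v => H.degree v = ℓ).card = 2 →
        Nonempty (H ≃g diamond)) := by
  classical
  obtain ⟨u, hu⟩ := hVhne
  have hℓh : ℓ ≠ h := hlh.ne
  have hdegcard : ∀ v, H.degree v = (H.neighborFinset v).card := fun v => rfl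
  -- any two all-h edges coincide
  have huniq : ∀ a b c d : V, H.Adj a b → H.Adj c d → H.degree a = h → H.degree b = h →
      H.degree c = h → H.degree d = h → s(a, b) = s(c, d) := by
    intro a b c d hab hcd ha hb hc hd
    refine hVh _ (SimpleGraph.mem_edgeFinset.2 hab) _ (SimpleGraph.mem_edgeFinset.2 hcd) ?_ ?_ <;>
      · intro v hv
        rcases Sym2.mem_iff.1 hv with rfl | rfl <;> assumption
  -- a degree-h vertex has at most one degree-h neighbor
  have hnbrh : ∀ v, H.degree v = h →
      ((H.neighborFinset v).filter fun x => ¬ H.degree x = ℓ).card ≤ 1 := by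
    intro v hv
    refine Finset.card_le_one.2 ?_
    intro a ha b hb
    simp only [Finset.mem_filter, SimpleGraph.mem_neighborFinset] at ha hb
    have ha2 : H.degree a = h := (hdeg a).resolve_left ha.2
    have hb2 : H.degree b = h := (hdeg b).resolve_left hb.2
    have := huniq v a v b ha.1 hb.1 hv ha2 hv hb2
    rcases Sym2.eq_iff.1 this with ⟨_, h2⟩ | ⟨h1, h2⟩
    · exact h2
    · exact absurd h2 (H.ne_of_adj ha.1).symm
  have hsub : ∀ v, (H.neighborFinset v).filter (fun x => H.degree x = ℓ) ⊆
      Finset.univ.filter fun x => H.degree x = ℓ := by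
    intro v x hx
    simp only [Finset.mem_filter] at hx ⊢
    exact ⟨Finset.mem_univ x, hx.2⟩
  have hsplit : ∀ v, ((H.neighborFinset v).filter (fun x => H.degree x = ℓ)).card +
      ((H.neighborFinset v).filter (fun x => ¬ H.degree x = ℓ)).card = H.degree v := by
    intro v
    rw [hdegcard v]
    exact Finset.card_filter_add_card_filter_not _
  have hbound : h ≤ (Finset.univ.filter fun v => H.degree v = ℓ).card + 1 := by
    have h1 := Finset.card_le_card (hsub u)
    have h2 := hnbrh u hu
    have h3 := hsplit u
    omega
  refine ⟨by omega, ?_⟩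
  intro hcard
  have hh3 : h = 3 := by omega
  have hl2 : ℓ = 2 := by omega
  subst hh3 hl2
  -- structure of a degree-3 vertex
  have hstruct : ∀ v, H.degree v = 3 →
      ((∀ x, H.degree x = 2 → H.Adj v x) ∧ ∃ w, H.Adj v w ∧ H.degree w = 3) := by
    intro v hv
    have h1 := Finset.card_le_card (hsub v)
    have h2 := hnbrh v hv
    have h3 := hsplit v
    rw [hv] at h3
    rw [hcard] at h1
    have hceq : ((H.neighborFinset v).filter (fun x => H.degree x = 2)).card = 2 := by omega
    have heqL : (H.neighborFinset v).filter (fun x => H.degree x = 2) =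
        Finset.univ.filter fun x => H.degree x = 2 :=
      Finset.eq_of_subset_of_card_le (hsub v) (by omega)
    constructor
    · intro x hx
      have : x ∈ (H.neighborFinset v).filter (fun x => H.degree x = 2) := by
        rw [heqL]; simp [hx]
      simp only [Finset.mem_filter, SimpleGraph.mem_neighborFinset] at this
      exact this.1
    · have hc1 : ((H.neighborFinset v).filter (fun x => ¬ H.degree x = 2)).card = 1 := by omega
      obtain ⟨w, hw⟩ := Finset.card_eq_one.1 hc1
      have hwmem : w ∈ (H.neighborFinset v).filter (fun x => ¬ H.degree x = 2) := by
        rw [hw]; exact Finset.mem_singleton_self w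
      simp only [Finset.mem_filter, SimpleGraph.mem_neighborFinset] at hwmem
      exact ⟨w, hwmem.1, (hdeg w).resolve_left hwmem.2⟩
  obtain ⟨hul, w, huw, hw⟩ := hstruct u hu
  have hune : u ≠ w := H.ne_of_adj huw
  -- every degree-3 vertex is u or w
  have hVh2 : ∀ z, H.degree z = 3 → z = u ∨ z = w := by
    intro z hz
    obtain ⟨_, z', hzz', hz'⟩ := hstruct z hz
    have := huniq z z' u w hzz' huw hz hz' hu hw
    rcases Sym2.eq_iff.1 this with ⟨h1, _⟩ | ⟨h1, _⟩
    · exact Or.inl h1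
    · exact Or.inr h1
  -- the two degree-2 vertices
  obtain ⟨x, y, hxy, hLxy⟩ := Finset.card_eq_two.1 hcard
  have hx : H.degree x = 2 := by
    have : x ∈ Finset.univ.filter fun v => H.degree v = 2 := by rw [hLxy]; simp
    simpa using this
  have hy : H.degree y = 2 := by
    have : y ∈ Finset.univ.filter fun v => H.degree v = 2 := by rw [hLxy]; simp
    simpa using this
  have hVl2 : ∀ z, H.degree z = 2 → z = x ∨ z = y := by
    intro z hz
    have : z ∈ Finset.univ.filter fun v => H.degree v = 2 := by simp [hz]
    rw [hLxy] at this
    simpa using this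
  have hwl := (hstruct w hw).1
  have hux : H.Adj u x := hul x hx
  have huy : H.Adj u y := hul y hy
  have hwx : H.Adj w x := hwl x hx
  have hwy : H.Adj w y := hwl y hy
  -- ne facts from degrees
  have hdne : ∀ p q : V, H.degree p = 3 → H.degree q = 2 → p ≠ q := by
    intro p q hp hq heq; rw [heq, hq] at hp; omega
  have hux' : u ≠ x := hdne u x hu hx
  have huy' : u ≠ y := hdne u y hu hy
  have hwx' : w ≠ x := hdne w x hw hx
  have hwy' : w ≠ y := hdne w y hw hy
  -- x and y are not adjacent
  have hxny : ¬ H.Adj x y := by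
    intro hadj
    have hsub3 : ({u, w, y} : Finset V) ⊆ H.neighborFinset x := by
      intro z hz
      simp only [Finset.mem_insert, Finset.mem_singleton] at hz
      rcases hz with rfl | rfl | rfl
      · exact (SimpleGraph.mem_neighborFinset _ _ _).2 hux.symm
      · exact (SimpleGraph.mem_neighborFinset _ _ _).2 hwx.symm
      · exact (SimpleGraph.mem_neighborFinset _ _ _).2 hadj
    have hc3 : ({u, w, y} : Finset V).card = 3 := by
      rw [Finset.card_insert_of_notMem (by simp [hune, huy']),
        Finset.card_insert_of_notMem (by simp [hwy'])]
      simp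
    have := Finset.card_le_card hsub3
    rw [hc3, ← hdegcard, hx] at this
    omega
  have hynx : ¬ H.Adj y x := fun hc => hxny (H.adj_symm hc)
  -- every vertex is one of u, w, x, y
  have hmem : ∀ v : V, v = u ∨ v = w ∨ v = x ∨ v = y := by
    intro v
    rcases hdeg v with hv | hv
    · rcases hVl2 v hv with rfl | rfl
      · exact Or.inr (Or.inr (Or.inl rfl))
      · exact Or.inr (Or.inr (Or.inr rfl))
    · rcases hVh2 v hv with rfl | rfl
      · exact Or.inl rfl
      · exact Or.inr (Or.inl rfl)
  -- build the isomorphism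
  refine ⟨⟨⟨fun v => if v = u then 0 else if v = w then 1 else if v = x then 2 else 3,
    fun i => if i = 0 then u else if i = 1 then w else if i = 2 then x else y,
    ?_, ?_⟩, ?_⟩⟩
  · intro v
    rcases hmem v with rfl | rfl | rfl | rfl <;>
      simp [hune, hux', huy', hwx', hwy', hxy, hune.symm, hux'.symm, huy'.symm,
        hwx'.symm, hwy'.symm, hxy.symm]
  · intro i
    fin_cases i <;>
      simp [hune, hux', huy', hwx', hwy', hxy, hune.symm, hux'.symm, huy'.symm,
        hwx'.symm, hwy'.symm, hxy.symm]
  · intro a b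
    rcases hmem a with rfl | rfl | rfl | rfl <;> rcases hmem b with rfl | rfl | rfl | rfl <;>
      simp [diamond, SimpleGraph.fromEdgeSet_adj, Sym2.eq_iff,
        hune, hux', huy', hwx', hwy', hxy, hune.symm, hux'.symm, huy'.symm,
        hwx'.symm, hwy'.symm, hxy.symm,
        huw, hux, huy, hwx, hwy, huw.symm, hux.symm, huy.symm, hwx.symm, hwy.symm,
        hxny, hynx]
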